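/- arXiv:1906.04038 — 2 statements merged into one kernel-verified Lean document; each statement's English description precedes it below -/
import Mathlib

section
/- Fix d ≥ 1 and k ∈ {0,1,…,d}. For every x ∈ ℝ^d: (i) ℓ0(x) ≤ k if and only if ‖x‖_(k) = ‖x‖; and (ii) ℓ0(x) = min{ j ∈ {0,1,…,d} : ‖x‖_(j) = ‖x‖ } (with the convention ‖·‖_(0) = 0). -/
noncomputable section

variable {d : ℕ}

/-- The projection `x_K` of `x` onto the coordinates in `K`
(the components outside `K` vanish). -/
def restr (K : Finset (Fin d)) (x : EuclideanSpace ℝ (Fin d)) : EuclideanSpace ℝ (Fin d) :=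
  WithLp.toLp 2 (fun i => if i ∈ K then x i else 0)

/-- The 2-k-symmetric gauge norm `‖y‖_(k) = sup {‖y_K‖ : |K| ≤ k}`
(equal to `0` for `k = 0`, by the convention `‖·‖_(0) = 0`). -/
def gaugeNorm (k : ℕ) (y : EuclideanSpace ℝ (Fin d)) : ℝ :=
  ⨆ K : {K : Finset (Fin d) // K.card ≤ k}, ‖restr (K : Finset (Fin d)) y‖

/-- The ℓ₀ pseudonorm: the number of nonzero components. -/
def l0 (x : EuclideanSpace ℝ (Fin d)) : ℕ :=
  (Finset.univ.filter fun i => x i ≠ 0).card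

open Classical in
/-- The Capra coupling `¢(x,y) = ⟨x,y⟩ / ‖x‖` for `x ≠ 0`, and `¢(0,y) = 0`. -/
def capra (x y : EuclideanSpace ℝ (Fin d)) : ℝ :=
  if x = 0 then 0 else (inner ℝ x y : ℝ) / ‖x‖

/-- The Capra conjugate of ℓ₀: `y ↦ max_{0 ≤ l ≤ d} (‖y‖_(l) − l)`. -/
def capraConjL0 (y : EuclideanSpace ℝ (Fin d)) : ℝ :=
  ⨆ l : Fin (d + 1), (gaugeNorm (l : ℕ) y - ((l : ℕ) : ℝ))

/-- `L₀(x) = sup_y (⟨x,y⟩ − max_{0 ≤ l ≤ d}(‖y‖_(l) − l))`, with values in `ℝ̄ = EReal`. -/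
def L0 (x : EuclideanSpace ℝ (Fin d)) : EReal :=
  ⨆ y : EuclideanSpace ℝ (Fin d), (((inner ℝ x y : ℝ) - capraConjL0 y : ℝ) : EReal)

/-- The k-support norm: the dual norm of the 2-k-symmetric gauge norm,
`‖y‖^sp_(k) = sup {⟨x,y⟩ : ‖x‖_(k) ≤ 1}`. -/
def suppNorm (k : ℕ) (y : EuclideanSpace ℝ (Fin d)) : ℝ :=
  sSup {c : ℝ | ∃ x : EuclideanSpace ℝ (Fin d), gaugeNorm k x ≤ 1 ∧ c = (inner ℝ x y : ℝ)}

/-- The unit ball of the k-support norm, with the convention `B^sp_(0) = {0}`. -/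
def Bsp (d k : ℕ) : Set (EuclideanSpace ℝ (Fin d)) :=
  if k = 0 then {0} else {y | suppNorm k y ≤ 1}

/-- The degenerate unit sphere `S_K = {x : x_{−K} = 0 and ‖x_K‖ = 1}`. -/
def sphK (K : Finset (Fin d)) : Set (EuclideanSpace ℝ (Fin d)) :=
  {x | (∀ i, i ∉ K → x i = 0) ∧ ‖restr K x‖ = 1}

/-- The degenerate unit ball `B_K = {x : x_{−K} = 0 and ‖x_K‖ ≤ 1}`. -/
def ballK (K : Finset (Fin d)) : Set (EuclideanSpace ℝ (Fin d)) :=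
  {x | (∀ i, i ∉ K → x i = 0) ∧ ‖restr K x‖ ≤ 1}

lemma restr_norm (K : Finset (Fin d)) (x : EuclideanSpace ℝ (Fin d)) :
    ‖restr K x‖ = Real.sqrt (∑ i ∈ K, x i ^ 2) := by
  rw [EuclideanSpace.norm_eq]
  congr 1
  have h : ∀ i : Fin d, ‖restr K x i‖ ^ 2 = if i ∈ K then x i ^ 2 else 0 := by
    intro i; by_cases hi : i ∈ K <;> simp [restr, hi]
  simp_rw [h, Finset.sum_ite_mem, Finset.univ_inter]

lemma restr_norm_le (K : Finset (Fin d)) (x : EuclideanSpace ℝ (Fin d)) :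
    ‖restr K x‖ ≤ ‖x‖ := by
  rw [restr_norm, EuclideanSpace.norm_eq]
  simp only [Real.norm_eq_abs, sq_abs]
  apply Real.sqrt_le_sqrt
  exact Finset.sum_le_sum_of_subset_of_nonneg (Finset.subset_univ K)
    (fun i _ _ => by positivity)

lemma gauge_le (k : ℕ) (x : EuclideanSpace ℝ (Fin d)) : gaugeNorm k x ≤ ‖x‖ := by
  have : Nonempty {K : Finset (Fin d) // K.card ≤ k} := ⟨⟨∅, by simp⟩⟩
  exact ciSup_le fun K => restr_norm_le _ _

lemma supp_restr (x : EuclideanSpace ℝ (Fin d)) :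
    restr (Finset.univ.filter fun i => x i ≠ 0) x = x := by
  ext i
  by_cases h : x i = 0 <;> simp [restr, h]

lemma l0_le_of_restr_eq {K : Finset (Fin d)} {x : EuclideanSpace ℝ (Fin d)}
    (h : ‖restr K x‖ = ‖x‖) :
    (Finset.univ.filter fun i => x i ≠ 0).card ≤ K.card := by
  apply Finset.card_le_card
  intro i hi
  simp only [Finset.mem_filter] at hi
  by_contra hK
  rw [restr_norm, EuclideanSpace.norm_eq] at h
  simp only [Real.norm_eq_abs, sq_abs] at h
  have hsum : ∑ j ∈ K, x j ^ 2 = ∑ j : Fin d, x j ^ 2 := by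
    have h1 : (0:ℝ) ≤ ∑ j ∈ K, x j ^ 2 := by positivity
    have h2 : (0:ℝ) ≤ ∑ j : Fin d, x j ^ 2 := by positivity
    exact (Real.sqrt_inj h1 h2).mp h
  have hd : ∑ j ∈ Finset.univ \ K, x j ^ 2 = 0 := by
    have := Finset.sum_sdiff (Finset.subset_univ K) (f := fun j => x j ^ 2)
    linarith
  have := (Finset.sum_eq_zero_iff_of_nonneg (fun j _ => by positivity)).mp hd i
    (by simp [hK])
  exact hi.2 (by nlinarith)

lemma main_iff (j : ℕ) (x : EuclideanSpace ℝ (Fin d)) :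
    l0 x ≤ j ↔ gaugeNorm j x = ‖x‖ := by
  have : Nonempty {K : Finset (Fin d) // K.card ≤ j} := ⟨⟨∅, by simp⟩⟩
  constructor
  · intro h
    refine le_antisymm (gauge_le j x) ?_
    have hb : BddAbove (Set.range fun K : {K : Finset (Fin d) // K.card ≤ j} =>
        ‖restr (K : Finset (Fin d)) x‖) := Set.Finite.bddAbove (Set.finite_range _)
    have := le_ciSup hb (⟨Finset.univ.filter fun i => x i ≠ 0, h⟩ :
      {K : Finset (Fin d) // K.card ≤ j})
    simpa [supp_restr, gaugeNorm] using this
  · intro h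
    obtain ⟨K, hK⟩ := exists_eq_ciSup_of_finite
      (f := fun K : {K : Finset (Fin d) // K.card ≤ j} => ‖restr (K : Finset (Fin d)) x‖)
    have : ‖restr (K : Finset (Fin d)) x‖ = ‖x‖ := by rw [hK]; exact h
    exact le_trans (l0_le_of_restr_eq this) K.2


/-- (i) `ℓ₀(x) ≤ k ↔ ‖x‖_(k) = ‖x‖`; and
(ii) `ℓ₀(x) = min {j ∈ {0,…,d} : ‖x‖_(j) = ‖x‖}`. -/
theorem l0_level_set_characterization (d : ℕ) (hd : 1 ≤ d) (k : ℕ) (hk : k ≤ d)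
    (x : EuclideanSpace ℝ (Fin d)) :
    (l0 x ≤ k ↔ gaugeNorm k x = ‖x‖) ∧
    l0 x = sInf {j : ℕ | j ≤ d ∧ gaugeNorm j x = ‖x‖} := by
  refine ⟨main_iff k x, ?_⟩
  have hl0d : l0 x ≤ d := by
    simpa [l0] using Finset.card_le_card (Finset.filter_subset _ (Finset.univ : Finset (Fin d)))
  have hmem : l0 x ∈ {j : ℕ | j ≤ d ∧ gaugeNorm j x = ‖x‖} :=
    ⟨hl0d, (main_iff (l0 x) x).mp le_rfl⟩
  refine le_antisymm (le_csInf ⟨_, hmem⟩ fun j hj => (main_iff j x).mpr hj.2)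
    (Nat.sInf_le hmem)
end
end

section
/- Fix d ≥ 1 and k ∈ {0,1,…,d}. The intersection of the Euclidean unit sphere S of ℝ^d with the level set {x : ℓ0(x) ≤ k} equals the topological closure of the intersection of S with the level curve {x : ℓ0(x) = k}: S ∩ {x : ℓ0(x) ≤ k} = closure( S ∩ {x : ℓ0(x) = k} ). -/
noncomputable section

variable {d : ℕ}

lemma l0_le_closed (d k : ℕ) : IsClosed {x : EuclideanSpace ℝ (Fin d) | l0 x ≤ k} := by
  have h : {x : EuclideanSpace ℝ (Fin d) | l0 x ≤ k}
      = ⋃ K : {K : Finset (Fin d) // K.card ≤ k},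
          {x : EuclideanSpace ℝ (Fin d) | ∀ i ∉ (K : Finset (Fin d)), x i = 0} := by
    ext x
    simp only [Set.mem_setOf_eq, Set.mem_iUnion]
    constructor
    · intro h
      exact ⟨⟨Finset.univ.filter (fun i => x i ≠ 0), h⟩, fun i hi => by
        by_contra hx; exact hi (Finset.mem_filter.2 ⟨Finset.mem_univ i, hx⟩)⟩
    · rintro ⟨⟨K, hK⟩, h⟩
      refine le_trans (Finset.card_le_card ?_) hK
      intro i hi
      rw [Finset.mem_filter] at hi
      by_contra hiK
      exact hi.2 (h i hiK)
  rw [h]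
  refine isClosed_iUnion_of_finite fun K => ?_
  have : {x : EuclideanSpace ℝ (Fin d) | ∀ i ∉ (K : Finset (Fin d)), x i = 0}
      = ⋂ i ∈ ((K : Finset (Fin d))ᶜ : Finset (Fin d)),
          (EuclideanSpace.proj (𝕜 := ℝ) i) ⁻¹' {0} := by
    ext x
    constructor
    · intro h
      simp only [Set.mem_iInter, Set.mem_preimage, Set.mem_singleton_iff]
      intro i hi
      rw [Finset.mem_compl] at hi
      exact h i hi
    · intro h i hi
      have := Set.mem_iInter.1 h i
      have := Set.mem_iInter.1 this (Finset.mem_compl.2 hi)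
      exact this
  rw [this]
  exact isClosed_biInter fun i _ =>
    isClosed_singleton.preimage (EuclideanSpace.proj (𝕜 := ℝ) i).continuous


set_option maxHeartbeats 1000000 in
/-- the intersection of the Euclidean unit sphere with the level set
`{x : ℓ₀(x) ≤ k}` equals the closure of its intersection with the level curve
`{x : ℓ₀(x) = k}`. -/
theorem sphere_inter_level_set_eq_closure_level_curve (d : ℕ) (hd : 1 ≤ d)
    (k : ℕ) (hk : k ≤ d) :
    {x : EuclideanSpace ℝ (Fin d) | ‖x‖ = 1} ∩ {x | l0 x ≤ k} =
      closure ({x : EuclideanSpace ℝ (Fin d) | ‖x‖ = 1} ∩ {x | l0 x = k}) := by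
  apply Set.Subset.antisymm
  · rintro x ⟨hxn, hxl⟩
    have hxl' : l0 x ≤ k := hxl
    have hxn' : ‖x‖ = 1 := hxn
    rcases eq_or_lt_of_le hxl' with heq | hlt
    · exact subset_closure ⟨hxn, heq⟩
    set T : Finset (Fin d) := Finset.univ.filter (fun i => x i ≠ 0) with hT
    set m : ℕ := l0 x with hm
    have hTcard : T.card = m := rfl
    set s : ℕ := k - m with hs
    have hs1 : 1 ≤ s := by omega
    have hcompl : s ≤ Tᶜ.card := by
      rw [Finset.card_compl]
      simp only [Fintype.card_fin]
      omega
    obtain ⟨E, hET, hEcard⟩ := Finset.exists_subset_card_eq hcompl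
    have hE0 : ∀ i ∈ E, x i = 0 := by
      intro i hi
      have := hET hi
      rw [Finset.mem_compl, hT, Finset.mem_filter] at this
      push_neg at this
      exact this (Finset.mem_univ i)
    rw [Metric.mem_closure_iff]
    intro ε hε
    have hsR : (1 : ℝ) ≤ (s : ℝ) := by exact_mod_cast hs1
    set δ : ℝ := min (1 / (2 * s)) (ε / (4 * s)) with hδ
    have hδpos : 0 < δ := by
      apply lt_min <;> positivity
    have hδ1 : δ ≤ 1 / (2 * s) := min_le_left _ _
    have hδ2 : δ ≤ ε / (4 * s) := min_le_right _ _
    have hr : (s : ℝ) * δ ^ 2 ≤ 1 / 2 := by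
      have h1 : (0:ℝ) < 2 * s := by positivity
      have := (le_div_iff₀ h1).1 hδ1
      nlinarith
    set c : ℝ := Real.sqrt (1 - s * δ ^ 2) with hc
    have hcpos : 0 < c := Real.sqrt_pos.2 (by linarith)
    have hcsq : c ^ 2 = 1 - s * δ ^ 2 := Real.sq_sqrt (by linarith)
    have hc1 : c ≤ 1 := Real.sqrt_le_one.2 (by nlinarith)
    have h1c : 1 - c ≤ s * δ ^ 2 := by
      have hrpos : (0:ℝ) ≤ (s:ℝ) * δ ^ 2 := by positivity
      have key := Real.sqrt_le_sqrt (show (1 - (s:ℝ) * δ ^ 2) ^ 2 ≤ 1 - s * δ ^ 2 by nlinarith)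
      rw [Real.sqrt_sq (by linarith : (0:ℝ) ≤ 1 - s * δ ^ 2)] at key
      linarith
    set e : EuclideanSpace ℝ (Fin d) := WithLp.toLp 2 (fun i => if i ∈ E then δ else 0) with he
    set y : EuclideanSpace ℝ (Fin d) := c • x + e with hy
    have hyi : ∀ i, y i = c * x i + e i := by
      intro i; rw [hy]; simp [PiLp.add_apply, PiLp.smul_apply, smul_eq_mul]
    -- sum of squares of e
    have hesum : ∑ i, ‖e i‖ ^ 2 = s * δ ^ 2 := by
      have : ∀ i : Fin d, ‖e i‖ ^ 2 = if i ∈ E then δ ^ 2 else 0 := by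
        intro i; by_cases hiE : i ∈ E <;> simp [he, hiE, sq_abs]
      rw [Finset.sum_congr rfl (fun i _ => this i)]
      rw [Finset.sum_ite_mem, Finset.univ_inter, Finset.sum_const, hEcard]
      simp [mul_comm]
    have hxsum : ∑ i, ‖x i‖ ^ 2 = 1 := by
      have h : Real.sqrt (∑ i, ‖x i‖ ^ 2) = 1 := by
        rw [← EuclideanSpace.norm_eq]; exact hxn'
      have h2 := congrArg (· ^ 2) h
      simp only [one_pow] at h2
      rwa [Real.sq_sqrt (by positivity)] at h2
    have hnorme : ‖e‖ = Real.sqrt s * δ := by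
      rw [EuclideanSpace.norm_eq, hesum, Real.sqrt_mul (by positivity),
        Real.sqrt_sq hδpos.le]
    have hyn : ‖y‖ = 1 := by
      rw [EuclideanSpace.norm_eq]
      have hterm : ∀ i : Fin d, ‖y i‖ ^ 2 = c ^ 2 * ‖x i‖ ^ 2 + ‖e i‖ ^ 2 := by
        intro i
        rw [hyi i]
        by_cases hiE : i ∈ E
        · have : x i = 0 := hE0 i hiE
          simp [this, abs_of_nonneg, he, Real.norm_eq_abs, sq_abs]
        · have : e i = 0 := by rw [he]; simp [hiE]
          simp [this, Real.norm_eq_abs, sq_abs, mul_pow]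
      rw [Finset.sum_congr rfl (fun i _ => hterm i), Finset.sum_add_distrib,
        ← Finset.mul_sum, hxsum, hesum, mul_one, hcsq]
      simp
    have hyl : l0 y = k := by
      have hfilter : (Finset.univ.filter fun i => y i ≠ 0) = T ∪ E := by
        ext i
        simp only [Finset.mem_filter, Finset.mem_univ, true_and, Finset.mem_union]
        rw [hyi i]
        by_cases hiE : i ∈ E
        · have hx0 : x i = 0 := hE0 i hiE
          have : e i = δ := by rw [he]; simp [hiE]
          simp [hx0, this, hδpos.ne', hiE]
        · have he0 : e i = 0 := by rw [he]; simp [hiE]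
          simp only [he0, add_zero, hiE, or_false]
          rw [hT]
          simp only [Finset.mem_filter, Finset.mem_univ, true_and]
          constructor
          · intro h hx0; exact h (by rw [hx0, mul_zero])
          · intro h; exact mul_ne_zero hcpos.ne' h
      have hdisj : Disjoint T E := by
        rw [Finset.disjoint_left]
        intro i hiT hiE
        exact (Finset.mem_compl.1 (hET hiE)) hiT
      rw [l0, hfilter, Finset.card_union_of_disjoint hdisj, hTcard, hEcard]
      omega
    refine ⟨y, ⟨hyn, hyl⟩, ?_⟩
    have hxy : x - y = (1 - c) • x - e := by
      ext i
      rw [PiLp.sub_apply, PiLp.sub_apply, PiLp.smul_apply, hyi i, smul_eq_mul]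
      ring
    have hsqrts : Real.sqrt s ≤ s := by
      have : Real.sqrt s ≤ Real.sqrt ((s:ℝ) ^ 2) := Real.sqrt_le_sqrt (by nlinarith)
      rwa [Real.sqrt_sq (by positivity)] at this
    have hb : dist x y < ε := by
      rw [dist_eq_norm, hxy]
      have h1 : ‖(1 - c) • x - e‖ ≤ ‖(1 - c) • x‖ + ‖e‖ := norm_sub_le _ _
      have h2 : ‖(1 - c) • x‖ = (1 - c) := by
        rw [norm_smul, hxn', mul_one, Real.norm_eq_abs, abs_of_nonneg (by linarith)]
      have h3 : (s:ℝ) * δ ^ 2 ≤ s * δ := by nlinarith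
      have h4 : Real.sqrt s * δ ≤ s * δ := by nlinarith [Real.sqrt_nonneg (s:ℝ)]
      have h5 : 2 * (s:ℝ) * δ ≤ ε / 2 := by
        have h6 : (0:ℝ) < 4 * s := by positivity
        have := (le_div_iff₀ h6).1 hδ2
        nlinarith
      rw [hnorme] at h1
      rw [h2] at h1
      linarith
    exact hb
  · apply closure_minimal
    · exact Set.inter_subset_inter_right _ (fun x hx => le_of_eq hx)
    · exact IsClosed.inter (isClosed_eq continuous_norm continuous_const) (l0_le_closed d k)
end
end
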